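/- (Claim 1 in the proof of Theorem 1.) Let n ≥ 1 and let c : Fin n → Fin n → ℝ be symmetric (c j j' = c j' j) with zero diagonal (c j j = 0), and suppose Σ_{j} Σ_{j' ≠ j} |c j j'| < 1/2. For x : Fin 2 → Fin n → {0,1}, define θ²(x) = Σ_j (x₁ⱼ + x₂ⱼ − 2·x₁ⱼ·x₂ⱼ) + 2·[ Σ_{j < j'} c j j' · (x₁ⱼ·x₁ⱼ' + x₂ⱼ·x₂ⱼ') − Σ_j Σ_{j' ≠ j} c j j' · x₁ⱼ·x₂ⱼ' ]. Then every maximizer x* of θ² over all x ∈ {0,1}^{2×n} satisfies x*₁ⱼ + x*₂ⱼ = 1 for every j. -/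
import Mathlib


open MeasureTheory ProbabilityTheory Real

/-- Standard normal p.d.f. -/
noncomputable def phi (w : ℝ) : ℝ := (1 / Real.sqrt (2 * Real.pi)) * Real.exp (-w ^ 2 / 2)

/-- Standard normal c.d.f. -/
noncomputable def Phi (w : ℝ) : ℝ := ∫ u in Set.Iic w, phi u

/-- The variance expression `θ(x)²` arising when `n` standard normal variables with
pairwise covariances `c j j'` are split in two groups according to `x`. -/
noncomputable def theta2 {n : ℕ} (c : Fin n → Fin n → ℝ) (x : Fin 2 → Fin n → ℝ) : ℝ :=
  (∑ j, (x 0 j + x 1 j - 2 * x 0 j * x 1 j)) +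
    2 * ((∑ j, ∑ j', if j < j' then c j j' * (x 0 j * x 0 j' + x 1 j * x 1 j') else 0)
      - ∑ j, ∑ j', if j' ≠ j then c j j' * (x 0 j * x 1 j') else 0)

lemma sum_ite_const_cond {n : ℕ} (j₀ : Fin n) (w : Fin n → ℝ) :
    ∀ j : Fin n, (∑ j', if j = j₀ then w j' else 0) = if j = j₀ then ∑ j', w j' else 0 := by
  intro j; split_ifs <;> simp

lemma theta2_flip {n : ℕ} (c : Fin n → Fin n → ℝ)
    (hsymm : ∀ j j', c j j' = c j' j)
    (x : Fin 2 → Fin n → ℝ) (j₀ : Fin n) (δ : ℝ) :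
    theta2 c (fun i j => if i = 0 ∧ j = j₀ then x 0 j + δ else x i j)
      = theta2 c x + δ * (1 - 2 * x 1 j₀)
        + 2 * δ * ∑ j', (if j' ≠ j₀ then c j₀ j' * (x 0 j' - x 1 j') else 0) := by
  have h1 : ∀ j, (fun i j => if i = 0 ∧ j = j₀ then x 0 j + δ else x i j) (1 : Fin 2) j = x 1 j := by
    intro j; simp
  have h0 : ∀ j, (fun i j => if i = 0 ∧ j = j₀ then x 0 j + δ else x i j) (0 : Fin 2) j
      = x 0 j + (if j = j₀ then δ else 0) := by
    intro j; by_cases h : j = j₀ <;> simp [h]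
  unfold theta2
  have h0' : ∀ j : Fin n, (if j = j₀ then x 0 j + δ else x 0 j) = x 0 j + (if j = j₀ then δ else 0) := by
    intro j; split_ifs <;> simp
  simp only [true_and, h0', show ((1:Fin 2) = 0) ↔ False from by simp, false_and, if_false]
  have hL : (∑ j, (x 0 j + (if j = j₀ then δ else 0) + x 1 j
        - 2 * (x 0 j + (if j = j₀ then δ else 0)) * x 1 j))
      = (∑ j, (x 0 j + x 1 j - 2 * x 0 j * x 1 j)) + δ * (1 - 2 * x 1 j₀) := by
    have : ∀ j ∈ Finset.univ, (x 0 j + (if j = j₀ then δ else 0) + x 1 j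
        - 2 * (x 0 j + (if j = j₀ then δ else 0)) * x 1 j)
        = (x 0 j + x 1 j - 2 * x 0 j * x 1 j) + (if j = j₀ then δ * (1 - 2 * x 1 j) else 0) := by
      intro j _; split_ifs <;> ring
    rw [Finset.sum_congr rfl this, Finset.sum_add_distrib, Finset.sum_ite_eq' Finset.univ j₀]
    simp
  have hS : (∑ j, ∑ j', if j < j' then
        c j j' * ((x 0 j + (if j = j₀ then δ else 0)) * (x 0 j' + (if j' = j₀ then δ else 0))
          + x 1 j * x 1 j') else 0)
      = (∑ j, ∑ j', if j < j' then c j j' * (x 0 j * x 0 j' + x 1 j * x 1 j') else 0)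
        + δ * ∑ j', (if j' ≠ j₀ then c j₀ j' * x 0 j' else 0) := by
    have key : ∀ j j' : Fin n, (if j < j' then
        c j j' * ((x 0 j + (if j = j₀ then δ else 0)) * (x 0 j' + (if j' = j₀ then δ else 0))
          + x 1 j * x 1 j') else 0)
        = (if j < j' then c j j' * (x 0 j * x 0 j' + x 1 j * x 1 j') else 0)
          + (if j = j₀ then (if j₀ < j' then δ * c j₀ j' * x 0 j' else 0) else 0)
          + (if j' = j₀ then (if j < j₀ then δ * c j j₀ * x 0 j else 0) else 0) := by
      intro j j'
      rcases eq_or_ne j j₀ with hj | hj <;> rcases eq_or_ne j' j₀ with hj' | hj' <;>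
        simp [hj, hj'] <;> split_ifs <;> ring
    simp only [key, Finset.sum_add_distrib]
    have hA : (∑ j : Fin n, ∑ j', if j = j₀ then (if j₀ < j' then δ * c j₀ j' * x 0 j' else 0) else 0)
        = ∑ j', if j₀ < j' then δ * c j₀ j' * x 0 j' else 0 := by
      rw [Finset.sum_congr rfl (fun j _ => sum_ite_const_cond j₀ _ j),
        Finset.sum_ite_eq' Finset.univ j₀]
      simp
    have hB : (∑ j : Fin n, ∑ j', if j' = j₀ then (if j < j₀ then δ * c j j₀ * x 0 j else 0) else 0)
        = ∑ j, if j < j₀ then δ * c j₀ j * x 0 j else 0 := by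
      apply Finset.sum_congr rfl
      intro j _
      rw [Finset.sum_ite_eq' Finset.univ j₀]
      simp [hsymm j j₀]
    rw [hA, hB, Finset.mul_sum, add_assoc, ← Finset.sum_add_distrib]
    congr 1
    apply Finset.sum_congr rfl
    intro j _
    rcases lt_trichotomy j j₀ with h | h | h
    · simp [h, h.ne, not_lt_of_gt h]; ring
    · simp [h]
    · simp [h, h.ne', not_lt_of_gt h]; ring
  have hT : (∑ j, ∑ j', if j' ≠ j then
        c j j' * ((x 0 j + (if j = j₀ then δ else 0)) * x 1 j') else 0)
      = (∑ j, ∑ j', if j' ≠ j then c j j' * (x 0 j * x 1 j') else 0)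
        + δ * ∑ j', (if j' ≠ j₀ then c j₀ j' * x 1 j' else 0) := by
    have key : ∀ j j' : Fin n, (if j' ≠ j then
        c j j' * ((x 0 j + (if j = j₀ then δ else 0)) * x 1 j') else 0)
        = (if j' ≠ j then c j j' * (x 0 j * x 1 j') else 0)
          + (if j = j₀ then (if j' ≠ j₀ then δ * c j₀ j' * x 1 j' else 0) else 0) := by
      intro j j'
      rcases eq_or_ne j j₀ with hj | hj <;> simp [hj] <;> split_ifs <;> ring
    simp only [key, Finset.sum_add_distrib]
    rw [Finset.sum_congr rfl (fun j _ => sum_ite_const_cond j₀ _ j),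
      Finset.sum_ite_eq' Finset.univ j₀, Finset.mul_sum]
    simp only [Finset.mem_univ, if_true]
    congr 1
    apply Finset.sum_congr rfl
    intro j _
    split_ifs <;> ring
  rw [hL, hS, hT]
  have hcomb : (∑ j', if j' ≠ j₀ then c j₀ j' * (x 0 j' - x 1 j') else 0)
      = (∑ j', if j' ≠ j₀ then c j₀ j' * x 0 j' else 0)
        - (∑ j', if j' ≠ j₀ then c j₀ j' * x 1 j' else 0) := by
    rw [← Finset.sum_sub_distrib]
    apply Finset.sum_congr rfl
    intro j _
    split_ifs <;> ring
  rw [hcomb]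
  ring

theorem maximizer_is_partition
    (n : ℕ) (hn : 1 ≤ n) (c : Fin n → Fin n → ℝ)
    (hsymm : ∀ j j', c j j' = c j' j) (hdiag : ∀ j, c j j = 0)
    (hsmall : (∑ j, ∑ j', if j' ≠ j then |c j j'| else 0) < 1 / 2)
    (x : Fin 2 → Fin n → ℝ) (hx : ∀ i j, x i j = 0 ∨ x i j = 1)
    (hmax : ∀ y : Fin 2 → Fin n → ℝ, (∀ i j, y i j = 0 ∨ y i j = 1) →
        theta2 c y ≤ theta2 c x) :
    ∀ j, x 0 j + x 1 j = 1 := by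
  intro j₀
  by_contra hne
  set δ : ℝ := 1 - 2 * x 0 j₀ with hδ
  have hy : ∀ i j, (fun i j => if i = 0 ∧ j = j₀ then x 0 j + δ else x i j) i j = 0 ∨
      (fun i j => if i = 0 ∧ j = j₀ then x 0 j + δ else x i j) i j = 1 := by
    intro i j
    by_cases h : i = 0 ∧ j = j₀
    · simp only [h, and_self, if_true, h.2]
      rcases hx 0 j₀ with h' | h' <;> rw [h'] <;> [right; left] <;> rw [hδ, h'] <;> ring
    · simp only [h, if_false]
      exact hx i j
  have hle := hmax _ hy
  rw [theta2_flip c hsymm x j₀ δ] at hle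
  have hone : δ * (1 - 2 * x 1 j₀) = 1 := by
    rcases hx 0 j₀ with h | h <;> rcases hx 1 j₀ with h' | h'
    · rw [hδ, h, h']; norm_num
    · exact absurd (by rw [h, h']; norm_num) hne
    · exact absurd (by rw [h, h']; norm_num) hne
    · rw [hδ, h, h']; norm_num
  rw [hone] at hle
  -- bound the correction sum
  set S := ∑ j', (if j' ≠ j₀ then c j₀ j' * (x 0 j' - x 1 j') else 0) with hSdef
  have habs : |S| ≤ ∑ j', (if j' ≠ j₀ then |c j₀ j'| else 0) := by
    refine (Finset.abs_sum_le_sum_abs _ _).trans (Finset.sum_le_sum ?_)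
    intro j _
    split_ifs with h
    · rw [abs_mul]
      refine mul_le_of_le_one_right (abs_nonneg _) ?_
      rcases hx 0 j with h0 | h0 <;> rcases hx 1 j with h1 | h1 <;>
        rw [h0, h1] <;> norm_num
    · simp
  have hrow : (∑ j', (if j' ≠ j₀ then |c j₀ j'| else 0))
      ≤ ∑ j, ∑ j', if j' ≠ j then |c j j'| else 0 := by
    refine Finset.single_le_sum (f := fun j => ∑ j', if j' ≠ j then |c j j'| else 0) ?_
      (Finset.mem_univ j₀)
    intro j _
    refine Finset.sum_nonneg fun j' _ => ?_
    split_ifs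
    · exact abs_nonneg _
    · exact le_refl 0
  have hdelta : |δ| = 1 := by
    rcases hx 0 j₀ with h | h <;> rw [hδ, h] <;> norm_num
  have hlow : -(1/2 : ℝ) < δ * S := by
    have h1 : |δ * S| < 1/2 := by
      rw [abs_mul, hdelta, one_mul]
      calc |S| ≤ _ := habs
        _ ≤ _ := hrow
        _ < 1/2 := hsmall
    linarith [neg_abs_le (δ * S), h1]
  rw [show 2 * δ * S = 2 * (δ * S) from by ring] at hle
  clear_value δ S
  linarith
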